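/- For all C ≥ 0 and δ ≥ 0 there exists δ′ ≥ 0 such that the following holds: if X is a C-roughly geodesic δ-hyperbolic metric space, then for all x, y, z ∈ X and all C-rough geodesics ξ₁ from x to y, ξ₂ from y to z, and ξ₃ from x to z, the image of ξ₃ is contained in the closed δ′-neighborhood of (image ξ₁) ∪ (image ξ₂); that is, all C-rough geodesic triangles in X are δ′-thin. -/
import Mathlib


/-- `ξ` is a `C`-rough geodesic from `x` to `y`, defined on `[0, d(x,y)]`. -/
def IsRoughGeodBetween (C : ℝ) {X : Type*} [MetricSpace X] (ξ : ℝ → X) (x y : X) : Prop :=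
  ξ 0 = x ∧ ξ (dist x y) = y ∧
  ∀ s ∈ Set.Icc (0 : ℝ) (dist x y), ∀ s' ∈ Set.Icc (0 : ℝ) (dist x y),
    |s - s'| - C ≤ dist (ξ s) (ξ s') ∧ dist (ξ s) (ξ s') ≤ |s - s'| + C

/-- A point `w` is within `(w|·)` Gromov product (based at `w`) plus `C + 2δ` of any
`C`-rough geodesic from `a` to `b`, in a `δ`-hyperbolic space. -/
theorem rough_geod_close {X : Type} [MetricSpace X] (C δ : ℝ)
    (hyp : ∀ x x' x'' y : X,
      (dist x y + dist y x'' - dist x x'') / 2 ≥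
        min ((dist x y + dist y x' - dist x x') / 2)
            ((dist x' y + dist y x'' - dist x' x'') / 2) - δ)
    (a b : X) (ξ : ℝ → X) (hξ : IsRoughGeodBetween C ξ a b) (w : X) :
    ∃ p ∈ ξ '' Set.Icc (0 : ℝ) (dist a b),
      dist w p ≤ (dist w a + dist w b - dist a b) / 2 + C + 2 * δ := by
  obtain ⟨h0, hd, hgeo⟩ := hξ
  set t : ℝ := (dist a w + dist a b - dist w b) / 2 with ht
  have tri1 : dist a w ≤ dist a b + dist b w := dist_triangle a b w
  have tri2 : dist w b ≤ dist w a + dist a b := dist_triangle w a b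
  have cwa : dist w a = dist a w := dist_comm w a
  have cbw : dist b w = dist w b := dist_comm b w
  have ht0 : 0 ≤ t := by rw [ht]; linarith
  have htd : t ≤ dist a b := by rw [ht]; linarith
  have hmem : t ∈ Set.Icc (0 : ℝ) (dist a b) := ⟨ht0, htd⟩
  have h0mem : (0 : ℝ) ∈ Set.Icc (0 : ℝ) (dist a b) := ⟨le_refl _, dist_nonneg⟩
  have hdmem : dist a b ∈ Set.Icc (0 : ℝ) (dist a b) := ⟨dist_nonneg, le_refl _⟩
  have h1 := (hgeo t hmem 0 h0mem).2
  have h2 := (hgeo t hmem (dist a b) hdmem).2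
  rw [h0] at h1
  rw [hd] at h2
  have e1 : |t - 0| = t := by rw [sub_zero, abs_of_nonneg ht0]
  have e2 : |t - dist a b| = dist a b - t := by
    rw [abs_of_nonpos (by linarith), neg_sub]
  rw [e1] at h1
  rw [e2] at h2
  -- h1 : dist (ξ t) a ≤ t + C,  h2 : dist (ξ t) b ≤ dist a b - t + C
  refine ⟨ξ t, ⟨t, hmem, rfl⟩, ?_⟩
  have hh := hyp a (ξ t) b w
  have c1 : dist a (ξ t) = dist (ξ t) a := dist_comm _ _
  have c2 : dist w (ξ t) = dist (ξ t) w := dist_comm _ _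
  -- lower bounds for both branches of the min
  have lb1 : (dist w a + dist w b - dist a b) / 2 / 2 + dist (ξ t) w / 2 - C / 2 ≤
      (dist a w + dist w (ξ t) - dist a (ξ t)) / 2 := by
    rw [c1, c2]; linarith
  have lb2 : (dist w a + dist w b - dist a b) / 2 / 2 + dist (ξ t) w / 2 - C / 2 ≤
      (dist (ξ t) w + dist w b - dist (ξ t) b) / 2 := by
    linarith
  have hmin := le_min lb1 lb2
  rw [c2]
  linarith [hh, hmin]

theorem stmt_9 (C δ : ℝ) (hC : 0 ≤ C) (hδ : 0 ≤ δ) :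
    ∃ δ' : ℝ, 0 ≤ δ' ∧
      ∀ (X : Type) [MetricSpace X],
        (∀ x y : X, ∃ ξ : ℝ → X, IsRoughGeodBetween C ξ x y) →
        (∀ x x' x'' y : X,
          (dist x y + dist y x'' - dist x x'') / 2 ≥
            min ((dist x y + dist y x' - dist x x') / 2)
                ((dist x' y + dist y x'' - dist x' x'') / 2) - δ) →
        ∀ (x y z : X) (ξ₁ ξ₂ ξ₃ : ℝ → X),
          IsRoughGeodBetween C ξ₁ x y → IsRoughGeodBetween C ξ₂ y z →
          IsRoughGeodBetween C ξ₃ x z →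
          ∀ s ∈ Set.Icc (0 : ℝ) (dist x z),
            ∃ p ∈ (ξ₁ '' Set.Icc (0 : ℝ) (dist x y)) ∪ (ξ₂ '' Set.Icc (0 : ℝ) (dist y z)),
              dist (ξ₃ s) p ≤ δ' := by
  refine ⟨2 * C + 3 * δ, by linarith, ?_⟩
  intro X _ _ hyp x y z ξ₁ ξ₂ ξ₃ h1 h2 h3 s hs
  obtain ⟨h30, h3d, h3geo⟩ := h3
  set w := ξ₃ s with hw
  -- `w` is within Gromov product ≤ C of the pair (x, z)
  have h0mem : (0 : ℝ) ∈ Set.Icc (0 : ℝ) (dist x z) := ⟨le_refl _, dist_nonneg⟩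
  have hdmem : dist x z ∈ Set.Icc (0 : ℝ) (dist x z) := ⟨dist_nonneg, le_refl _⟩
  have e1 := (h3geo s hs 0 h0mem).2
  have e2 := (h3geo s hs (dist x z) hdmem).2
  rw [h30] at e1
  rw [h3d] at e2
  rw [abs_of_nonneg (by linarith [hs.1] : (0:ℝ) ≤ s - 0)] at e1
  rw [abs_of_nonpos (by linarith [hs.2] : s - dist x z ≤ 0), neg_sub] at e2
  -- e1 : dist w x ≤ s - 0 + C, e2 : dist w z ≤ dist x z - s + C
  have hG : (dist x w + dist w z - dist x z) / 2 ≤ C := by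
    have := dist_comm x w
    linarith [e1, e2, dist_comm w x]
  have hh := hyp x y z w
  rcases le_total ((dist x w + dist w y - dist x y) / 2)
      ((dist y w + dist w z - dist y z) / 2) with hc | hc
  · -- close to ξ₁
    obtain ⟨p, hp, hdp⟩ := rough_geod_close C δ hyp x y ξ₁ h1 w
    refine ⟨p, Or.inl hp, ?_⟩
    have hmin : min ((dist x w + dist w y - dist x y) / 2)
        ((dist y w + dist w z - dist y z) / 2) =
        (dist x w + dist w y - dist x y) / 2 := min_eq_left hc
    rw [hmin] at hh
    have : (dist w x + dist w y - dist x y) / 2 ≤ C + δ := by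
      rw [dist_comm w x]; linarith
    linarith
  · obtain ⟨p, hp, hdp⟩ := rough_geod_close C δ hyp y z ξ₂ h2 w
    refine ⟨p, Or.inr hp, ?_⟩
    have hmin : min ((dist x w + dist w y - dist x y) / 2)
        ((dist y w + dist w z - dist y z) / 2) =
        (dist y w + dist w z - dist y z) / 2 := min_eq_right hc
    rw [hmin] at hh
    have : (dist w y + dist w z - dist y z) / 2 ≤ C + δ := by
      rw [dist_comm w y]; linarith
    linarith
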